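/- Let 𝒜 be a unital C*-algebra and (V, V⁺, e) an AOU 𝒜-space. Suppose (Q_n)_{n∈ℕ} is an operator 𝒜-system structure on V with Q_1 = V⁺ such that, for every operator 𝒜-system S, every positive 𝒜-bimodule map φ: (V, (Q_n), e) → S is completely positive. Then Q_n = C_n^{max}(V;𝒜) for every n ∈ ℕ; that is, the identity map of V is a unital 𝒜-bimodule complete order isomorphism from (V, (Q_n), e) onto omax_𝒜(V) := (V, (C_n^{max}(V;𝒜)), e). -/
import Mathlib


open Matrix

noncomputable section

/-- An AOU `𝒜`-space: an Archimedean order unit *-vector space `(V, pos, e)` which is an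
`A`-bimodule (actions `l`, `r`) satisfying `(a·x)* = x*·a*`, `a·e = e·a` and
`a*·x·a ∈ V⁺` for `x ∈ V⁺`. -/
structure AOUPack (A V : Type*) [Ring A] [StarRing A] [Algebra ℂ A]
    [AddCommGroup V] [Module ℂ V] [StarAddMonoid V] [StarModule ℂ V] where
  /-- the left action `a · x` -/
  l : A → V → V
  /-- the right action `x · a` -/
  r : V → A → V
  /-- the cone `V⁺` of positive elements -/
  pos : Set V
  /-- the Archimedean order unit -/
  e : V
  l_add : ∀ a b x, l (a + b) x = l a x + l b x
  add_l : ∀ a x y, l a (x + y) = l a x + l a y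
  smul_l : ∀ (c : ℂ) a x, l (c • a) x = c • l a x
  l_smul : ∀ (c : ℂ) a x, l a (c • x) = c • l a x
  r_add : ∀ x y a, r (x + y) a = r x a + r y a
  add_r : ∀ x a b, r x (a + b) = r x a + r x b
  smul_r : ∀ (c : ℂ) x a, r (c • x) a = c • r x a
  r_smul : ∀ (c : ℂ) x a, r x (c • a) = c • r x a
  mul_l : ∀ a b x, l (a * b) x = l a (l b x)
  mul_r : ∀ x a b, r x (a * b) = r (r x a) b
  l_r_assoc : ∀ a x b, r (l a x) b = l a (r x b)
  one_l : ∀ x, l 1 x = x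
  star_l : ∀ a x, star (l a x) = r (star x) (star a)
  pos_isSelfAdjoint : ∀ x ∈ pos, star x = x
  pos_add_mem : ∀ x ∈ pos, ∀ y ∈ pos, x + y ∈ pos
  pos_smul_mem : ∀ (t : ℝ), 0 ≤ t → ∀ x ∈ pos, (t : ℂ) • x ∈ pos
  pos_nonempty : pos.Nonempty
  pos_salient : ∀ x ∈ pos, -x ∈ pos → x = 0
  e_isSelfAdjoint : star e = e
  e_orderUnit : ∀ x, star x = x → ∃ t : ℝ, 0 < t ∧ (t : ℂ) • e - x ∈ pos
  e_arch : ∀ x, (∀ t : ℝ, 0 < t → x + (t : ℂ) • e ∈ pos) → x ∈ pos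
  e_comm : ∀ a, l a e = r e a
  conj_mem : ∀ a, ∀ x ∈ pos, r (l (star a) x) a ∈ pos

namespace AOUPack

variable {A V : Type*} [Ring A] [StarRing A] [Algebra ℂ A]
  [AddCommGroup V] [Module ℂ V] [StarAddMonoid V] [StarModule ℂ V]

variable (P : AOUPack A V)

/-- The action of a matrix over `A` on a matrix over `V` from the left:
`(M · X)_{ij} = Σ_p M_{ip} · X_{pj}`. -/
def amul {k m n : ℕ} (M : Matrix (Fin k) (Fin m) A) (X : Matrix (Fin m) (Fin n) V) :
    Matrix (Fin k) (Fin n) V :=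
  Matrix.of fun i j => ∑ p, P.l (M i p) (X p j)

/-- The action of a matrix over `A` on a matrix over `V` from the right:
`(X · N)_{ij} = Σ_p X_{ip} · N_{pj}`. -/
def vmul {m n l : ℕ} (X : Matrix (Fin m) (Fin n) V) (N : Matrix (Fin n) (Fin l) A) :
    Matrix (Fin m) (Fin l) V :=
  Matrix.of fun i j => ∑ p, P.r (X i p) (N p j)

/-- The congruence `M* · X · M` of `X ∈ M_m(V)` by `M ∈ M_{m,n}(A)`. -/
def conj {m n : ℕ} (M : Matrix (Fin m) (Fin n) A) (X : Matrix (Fin m) (Fin m) V) :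
    Matrix (Fin n) (Fin n) V :=
  P.vmul (P.amul Mᴴ X) M

/-- The diagonal matrix `e_n ∈ M_n(V)` with all diagonal entries equal to `e`. -/
def matE (n : ℕ) : Matrix (Fin n) (Fin n) V := Matrix.diagonal fun _ => P.e

/-- `C_n^{min}(V; A)`: hermitian `X ∈ M_n(V)` with `C* · X · C ∈ V⁺` for every
column `C ∈ M_{n,1}(A)`. -/
def Cmin (n : ℕ) : Set (Matrix (Fin n) (Fin n) V) :=
  {X | Xᴴ = X ∧ ∀ C : Matrix (Fin n) (Fin 1) A, P.conj C X 0 0 ∈ P.pos}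

/-- `D_n^{max}(V; A)`: finite sums `Σ_i A_i* · x_i · A_i` with `x_i ∈ V⁺` and
`A_i ∈ M_{1,n}(A)`. -/
def Dmax (n : ℕ) : Set (Matrix (Fin n) (Fin n) V) :=
  {X | ∃ (k : ℕ) (x : Fin k → V) (a : Fin k → Matrix (Fin 1) (Fin n) A),
    (∀ i, x i ∈ P.pos) ∧ X = ∑ i, P.conj (a i) (Matrix.of fun _ _ => x i)}

/-- `C_n^{max}(V; A) = {X : X + r e_n ∈ D_n^{max}(V; A) for all r > 0}`. -/
def Cmax (n : ℕ) : Set (Matrix (Fin n) (Fin n) V) :=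
  {X | ∀ t : ℝ, 0 < t → X + (t : ℂ) • P.matE n ∈ P.Dmax n}

/-- `Q` is an operator `A`-system structure on `V`: an `A`-compatible matrix ordering
with `Q 1 = V⁺` such that `e_n` is an Archimedean order unit for `Q n` for every `n`. -/
structure IsOperatorSystemStructure (Q : ∀ n : ℕ, Set (Matrix (Fin n) (Fin n) V)) : Prop where
  herm : ∀ n, ∀ X ∈ Q n, Xᴴ = X
  add_mem : ∀ n, ∀ X ∈ Q n, ∀ Y ∈ Q n, X + Y ∈ Q n
  smul_mem : ∀ n (t : ℝ), 0 ≤ t → ∀ X ∈ Q n, (t : ℂ) • X ∈ Q n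
  nonempty : ∀ n, (Q n).Nonempty
  salient : ∀ n, ∀ X ∈ Q n, -X ∈ Q n → X = 0
  compat : ∀ m n (X : Matrix (Fin m) (Fin m) V) (M : Matrix (Fin m) (Fin n) A),
    X ∈ Q m → P.conj M X ∈ Q n
  level_one : ∀ X : Matrix (Fin 1) (Fin 1) V, X ∈ Q 1 ↔ X 0 0 ∈ P.pos
  orderUnit : ∀ n (X : Matrix (Fin n) (Fin n) V), Xᴴ = X →
    ∃ t : ℝ, 0 < t ∧ (t : ℂ) • P.matE n - X ∈ Q n
  arch : ∀ n (X : Matrix (Fin n) (Fin n) V),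
    (∀ t : ℝ, 0 < t → X + (t : ℂ) • P.matE n ∈ Q n) → X ∈ Q n

end AOUPack
namespace AOUPack

section Helpers

variable {A V : Type*} [Ring A] [StarRing A] [Algebra ℂ A]
  [AddCommGroup V] [Module ℂ V] [StarAddMonoid V] [StarModule ℂ V]
  (P : AOUPack A V)

/-- left action bundled as an additive hom in the module variable -/
def lAdd (a : A) : V →+ V := AddMonoidHom.mk' (P.l a) (P.add_l a)
/-- right action bundled as an additive hom in the module variable -/
def rAdd (b : A) : V →+ V := AddMonoidHom.mk' (fun x => P.r x b) (fun x y => P.r_add x y b)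
/-- left action bundled as an additive hom in the algebra variable -/
def lAdd' (x : V) : A →+ V := AddMonoidHom.mk' (fun a => P.l a x) (fun a b => P.l_add a b x)
/-- right action bundled as an additive hom in the algebra variable -/
def rAdd' (x : V) : A →+ V := AddMonoidHom.mk' (fun b => P.r x b) (fun a b => P.add_r x a b)

lemma l_sum {ι : Type*} (a : A) (s : Finset ι) (f : ι → V) :
    P.l a (∑ i ∈ s, f i) = ∑ i ∈ s, P.l a (f i) := map_sum (P.lAdd a) f s

lemma r_sum {ι : Type*} (b : A) (s : Finset ι) (f : ι → V) :
    P.r (∑ i ∈ s, f i) b = ∑ i ∈ s, P.r (f i) b := map_sum (P.rAdd b) f s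

lemma sum_l {ι : Type*} (x : V) (s : Finset ι) (f : ι → A) :
    P.l (∑ i ∈ s, f i) x = ∑ i ∈ s, P.l (f i) x := map_sum (P.lAdd' x) f s

lemma sum_r {ι : Type*} (x : V) (s : Finset ι) (f : ι → A) :
    P.r x (∑ i ∈ s, f i) = ∑ i ∈ s, P.r x (f i) := map_sum (P.rAdd' x) f s

lemma l_zero (a : A) : P.l a 0 = 0 := (P.lAdd a).map_zero
lemma zero_l (x : V) : P.l 0 x = 0 := (P.lAdd' x).map_zero
lemma r_zero (x : V) : P.r x 0 = 0 := (P.rAdd' x).map_zero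
lemma zero_r (b : A) : P.r 0 b = 0 := (P.rAdd b).map_zero

lemma star_r (x : V) (a : A) : star (P.r x a) = P.l (star a) (star x) := by
  have h := P.star_l (star a) (star x)
  rw [star_star, star_star] at h
  rw [← h, star_star]

lemma r_one (x : V) : P.r x 1 = x := by
  have h := P.star_r x 1
  rw [star_one, P.one_l] at h
  exact star_injective h

lemma zero_mem_pos : (0 : V) ∈ P.pos := by
  obtain ⟨x, hx⟩ := P.pos_nonempty
  have := P.pos_smul_mem 0 le_rfl x hx
  simpa using this

lemma e_mem_pos : P.e ∈ P.pos := by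
  obtain ⟨t, ht, hm⟩ := P.e_orderUnit (-P.e) (by rw [star_neg, P.e_isSelfAdjoint])
  have h1 : ((t + 1 : ℝ) : ℂ) • P.e ∈ P.pos := by
    have : (t : ℂ) • P.e - -P.e = ((t + 1 : ℝ) : ℂ) • P.e := by push_cast; module
    rwa [this] at hm
  have h2 := P.pos_smul_mem (t + 1)⁻¹ (by positivity) _ h1
  rwa [smul_smul, ← Complex.ofReal_mul, inv_mul_cancel₀ (by positivity), Complex.ofReal_one,
    one_smul] at h2

lemma smul_e_mem (t : ℝ) (ht : 0 ≤ t) : (t : ℂ) • P.e ∈ P.pos :=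
  P.pos_smul_mem t ht _ P.e_mem_pos

lemma l_e_r (a b : A) : P.r (P.l a P.e) b = P.l (a * b) P.e := by
  rw [P.l_r_assoc, ← P.e_comm, P.mul_l]

end Helpers

end AOUPack
namespace AOUPack

section MatrixHelpers

variable {A V : Type*} [Ring A] [StarRing A] [Algebra ℂ A]
  [AddCommGroup V] [Module ℂ V] [StarAddMonoid V] [StarModule ℂ V]
  (P : AOUPack A V)

lemma amul_mul {k m o n : ℕ} (M : Matrix (Fin k) (Fin m) A) (N : Matrix (Fin m) (Fin o) A)
    (X : Matrix (Fin o) (Fin n) V) : P.amul (M * N) X = P.amul M (P.amul N X) := by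
  ext i j
  simp only [amul, Matrix.of_apply, Matrix.mul_apply, P.sum_l, P.mul_l, P.l_sum]
  exact Finset.sum_comm

lemma vmul_mul {m n o l : ℕ} (X : Matrix (Fin m) (Fin n) V) (M : Matrix (Fin n) (Fin o) A)
    (N : Matrix (Fin o) (Fin l) A) : P.vmul X (M * N) = P.vmul (P.vmul X M) N := by
  ext i j
  simp only [vmul, Matrix.of_apply, Matrix.mul_apply, P.sum_r, P.mul_r, P.r_sum]
  exact Finset.sum_comm

lemma amul_vmul {k m n o : ℕ} (M : Matrix (Fin k) (Fin m) A) (X : Matrix (Fin m) (Fin n) V)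
    (N : Matrix (Fin n) (Fin o) A) : P.amul M (P.vmul X N) = P.vmul (P.amul M X) N := by
  ext i j
  simp only [amul, vmul, Matrix.of_apply, P.l_sum, P.r_sum, P.l_r_assoc]
  exact Finset.sum_comm

lemma conj_conj {m n o : ℕ} (M : Matrix (Fin m) (Fin n) A) (N : Matrix (Fin n) (Fin o) A)
    (X : Matrix (Fin m) (Fin m) V) : P.conj N (P.conj M X) = P.conj (M * N) X := by
  unfold conj
  rw [Matrix.conjTranspose_mul, P.amul_mul, P.amul_vmul, P.vmul_mul]

lemma amul_add {k m n : ℕ} (M : Matrix (Fin k) (Fin m) A) (X Y : Matrix (Fin m) (Fin n) V) :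
    P.amul M (X + Y) = P.amul M X + P.amul M Y := by
  ext i j
  simp only [amul, Matrix.of_apply, Matrix.add_apply, P.add_l, Finset.sum_add_distrib]

lemma vmul_add {m n l : ℕ} (X Y : Matrix (Fin m) (Fin n) V) (N : Matrix (Fin n) (Fin l) A) :
    P.vmul (X + Y) N = P.vmul X N + P.vmul Y N := by
  ext i j
  simp only [vmul, Matrix.of_apply, Matrix.add_apply, P.r_add, Finset.sum_add_distrib]

lemma conj_add {m n : ℕ} (M : Matrix (Fin m) (Fin n) A) (X Y : Matrix (Fin m) (Fin m) V) :
    P.conj M (X + Y) = P.conj M X + P.conj M Y := by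
  unfold conj; rw [P.amul_add, P.vmul_add]

lemma amul_smul {k m n : ℕ} (M : Matrix (Fin k) (Fin m) A) (c : ℂ)
    (X : Matrix (Fin m) (Fin n) V) : P.amul M (c • X) = c • P.amul M X := by
  ext i j
  simp only [amul, Matrix.of_apply, Matrix.smul_apply, P.l_smul, Finset.smul_sum]

lemma vmul_smul {m n l : ℕ} (c : ℂ) (X : Matrix (Fin m) (Fin n) V)
    (N : Matrix (Fin n) (Fin l) A) : P.vmul (c • X) N = c • P.vmul X N := by
  ext i j
  simp only [vmul, Matrix.of_apply, Matrix.smul_apply, P.smul_r, Finset.smul_sum]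

lemma conj_smul {m n : ℕ} (M : Matrix (Fin m) (Fin n) A) (c : ℂ)
    (X : Matrix (Fin m) (Fin m) V) : P.conj M (c • X) = c • P.conj M X := by
  unfold conj; rw [P.amul_smul, P.vmul_smul]

/-- congruence bundled as an additive hom -/
def conjAdd {m n : ℕ} (M : Matrix (Fin m) (Fin n) A) :
    Matrix (Fin m) (Fin m) V →+ Matrix (Fin n) (Fin n) V :=
  AddMonoidHom.mk' (P.conj M) (P.conj_add M)

lemma conj_sum {ι : Type*} {m n : ℕ} (M : Matrix (Fin m) (Fin n) A) (s : Finset ι)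
    (f : ι → Matrix (Fin m) (Fin m) V) :
    P.conj M (∑ i ∈ s, f i) = ∑ i ∈ s, P.conj M (f i) := map_sum (P.conjAdd M) f s

lemma conjTranspose_conj {m n : ℕ} (M : Matrix (Fin m) (Fin n) A)
    (X : Matrix (Fin m) (Fin m) V) : (P.conj M X)ᴴ = P.conj M Xᴴ := by
  ext i j
  simp only [Matrix.conjTranspose_apply, conj, vmul, amul, Matrix.of_apply, star_sum,
    P.star_r, P.star_l, star_star, P.l_sum, P.r_sum, P.l_r_assoc]
  exact Finset.sum_comm

lemma matE_herm (n : ℕ) : (P.matE n)ᴴ = P.matE n := by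
  ext i j
  simp only [matE, Matrix.conjTranspose_apply, Matrix.diagonal_apply]
  by_cases h : i = j
  · subst h; simp [P.e_isSelfAdjoint]
  · have h' : ¬ j = i := fun h'' => h h''.symm
    simp [h, h']

end MatrixHelpers

end AOUPack
namespace AOUPack

section DmaxHelpers

variable {A V : Type*} [Ring A] [StarRing A] [Algebra ℂ A] [StarModule ℂ A]
  [AddCommGroup V] [Module ℂ V] [StarAddMonoid V] [StarModule ℂ V]
  (P : AOUPack A V)

lemma Dmax_zero (n : ℕ) : (0 : Matrix (Fin n) (Fin n) V) ∈ P.Dmax n :=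
  ⟨0, Fin.elim0, Fin.elim0, fun i => i.elim0, by simp⟩

lemma Dmax_add {n : ℕ} {X Y : Matrix (Fin n) (Fin n) V} (hX : X ∈ P.Dmax n)
    (hY : Y ∈ P.Dmax n) : X + Y ∈ P.Dmax n := by
  obtain ⟨k₁, x₁, a₁, hx₁, rfl⟩ := hX
  obtain ⟨k₂, x₂, a₂, hx₂, rfl⟩ := hY
  refine ⟨k₁ + k₂, Fin.append x₁ x₂, Fin.append a₁ a₂, ?_, ?_⟩
  · intro i
    refine Fin.addCases (fun i => ?_) (fun i => ?_) i
    · rw [Fin.append_left]; exact hx₁ i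
    · rw [Fin.append_right]; exact hx₂ i
  · rw [Fin.sum_univ_add]
    congr 1 <;> apply Finset.sum_congr rfl <;> intro i _
    · rw [Fin.append_left, Fin.append_left]
    · rw [Fin.append_right, Fin.append_right]

lemma Dmax_smul {n : ℕ} (t : ℝ) (ht : 0 ≤ t) {X : Matrix (Fin n) (Fin n) V}
    (hX : X ∈ P.Dmax n) : (t : ℂ) • X ∈ P.Dmax n := by
  obtain ⟨k, x, a, hx, rfl⟩ := hX
  refine ⟨k, fun i => (t : ℂ) • x i, a, fun i => P.pos_smul_mem t ht _ (hx i), ?_⟩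
  rw [Finset.smul_sum]
  refine Finset.sum_congr rfl fun i _ => ?_
  have h2 : ((t : ℂ) • (Matrix.of fun _ _ => x i) : Matrix (Fin 1) (Fin 1) V)
      = Matrix.of fun _ _ => (t : ℂ) • x i := by
    ext p q; simp
  rw [← h2, P.conj_smul]

lemma Dmax_sum {ι : Type*} {n : ℕ} (s : Finset ι) (f : ι → Matrix (Fin n) (Fin n) V)
    (hf : ∀ i ∈ s, f i ∈ P.Dmax n) : ∑ i ∈ s, f i ∈ P.Dmax n :=
  Finset.sum_induction f (· ∈ P.Dmax n) (fun _ _ ha hb => P.Dmax_add ha hb) (P.Dmax_zero n) hf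

lemma Dmax_conj {m n : ℕ} (M : Matrix (Fin m) (Fin n) A) {X : Matrix (Fin m) (Fin m) V}
    (hX : X ∈ P.Dmax m) : P.conj M X ∈ P.Dmax n := by
  obtain ⟨k, x, a, hx, rfl⟩ := hX
  refine ⟨k, x, fun i => a i * M, hx, ?_⟩
  rw [P.conj_sum]
  exact Finset.sum_congr rfl fun i _ => P.conj_conj _ _ _

lemma Dmax_herm {n : ℕ} {X : Matrix (Fin n) (Fin n) V} (hX : X ∈ P.Dmax n) : Xᴴ = X := by
  obtain ⟨k, x, a, hx, rfl⟩ := hX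
  rw [Matrix.conjTranspose_sum]
  refine Finset.sum_congr rfl fun i _ => ?_
  rw [P.conjTranspose_conj]
  have h2 : ((Matrix.of fun _ _ => x i : Matrix (Fin 1) (Fin 1) V))ᴴ
      = Matrix.of fun _ _ => x i := by
    ext p q
    exact P.pos_isSelfAdjoint _ (hx i)
  rw [h2]

/-- the rank-one "engine" matrix `((c̄_p c_q) • x)_{p,q}` -/
def eng (n : ℕ) (c : Fin n → ℂ) (x : V) : Matrix (Fin n) (Fin n) V :=
  Matrix.of fun p q => ((starRingEnd ℂ) (c p) * c q) • x

lemma eng_mem_Dmax {n : ℕ} (c : Fin n → ℂ) {x : V} (hx : x ∈ P.pos) :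
    eng n c x ∈ P.Dmax n := by
  refine ⟨1, fun _ => x, fun _ => Matrix.of fun _ q => c q • (1 : A), fun _ => hx, ?_⟩
  rw [Fin.sum_univ_one]
  ext p q
  simp only [eng, conj, vmul, amul, Matrix.of_apply, Matrix.conjTranspose_apply,
    Fin.sum_univ_one, star_smul, star_one]
  rw [P.smul_l, P.one_l, P.smul_r, P.r_smul, P.r_one, smul_smul, starRingEnd_apply]

lemma diag_mem_Dmax {n : ℕ} (c : Fin n → ℝ) (hc : ∀ p, 0 ≤ c p) :
    Matrix.of (fun p q => if p = q then ((c p : ℝ) : ℂ) • P.e else 0) ∈ P.Dmax n := by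
  have : Matrix.of (fun p q => if p = q then ((c p : ℝ) : ℂ) • P.e else 0)
      = ∑ i : Fin n, eng n (fun p => if p = i then 1 else 0) (((c i : ℝ) : ℂ) • P.e) := by
    ext p q
    simp only [Matrix.sum_apply, eng, Matrix.of_apply]
    rw [Finset.sum_eq_single p]
    · by_cases h : p = q
      · subst h; simp
      · have h' : ¬ q = p := fun h'' => h h''.symm
        simp [h, h']
    · intro b _ hb
      have : ¬ p = b := fun h => hb h.symm
      simp [this]
    · simp
  rw [this]
  exact P.Dmax_sum _ _ fun i _ => P.eng_mem_Dmax _ (P.smul_e_mem _ (hc i))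

lemma matE_mem_Dmax (n : ℕ) : P.matE n ∈ P.Dmax n := by
  have h := P.diag_mem_Dmax (n := n) (fun _ => 1) (fun _ => zero_le_one)
  convert h using 1
  ext p q
  simp [matE, Matrix.diagonal_apply]

lemma smul_matE_mem_Dmax {n : ℕ} (t : ℝ) (ht : 0 ≤ t) : (t : ℂ) • P.matE n ∈ P.Dmax n :=
  P.Dmax_smul t ht (P.matE_mem_Dmax n)

lemma Dmax_subset_Cmax {n : ℕ} {X : Matrix (Fin n) (Fin n) V} (hX : X ∈ P.Dmax n) :
    X ∈ P.Cmax n := fun t ht => P.Dmax_add hX (P.smul_matE_mem_Dmax t ht.le)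

end DmaxHelpers

end AOUPack
namespace AOUPack

section OrderUnit

variable {A V : Type*} [Ring A] [StarRing A] [Algebra ℂ A] [StarModule ℂ A]
  [AddCommGroup V] [Module ℂ V] [StarAddMonoid V] [StarModule ℂ V]
  (P : AOUPack A V)

/-- the elementary hermitian matrix with `v` at `(i,j)` and `v*` at `(j,i)` -/
def Zmat (n : ℕ) (v : V) (i j : Fin n) : Matrix (Fin n) (Fin n) V :=
  Matrix.of fun p q => (if p = i ∧ q = j then v else 0) + (if p = j ∧ q = i then star v else 0)

lemma sum_Zmat {n : ℕ} (X : Matrix (Fin n) (Fin n) V) :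
    ∑ z : Fin n × Fin n, Zmat n (X z.1 z.2) z.1 z.2 = X + Xᴴ := by
  ext p q
  simp only [Matrix.sum_apply, Zmat, Matrix.of_apply, Matrix.add_apply,
    Matrix.conjTranspose_apply, Finset.sum_add_distrib]
  congr 1
  · rw [Finset.sum_eq_single (p, q)]
    · simp
    · rintro ⟨z1, z2⟩ _ hz
      rw [if_neg]
      rintro ⟨rfl, rfl⟩; exact hz rfl
    · simp
  · rw [Finset.sum_eq_single (q, p)]
    · simp
    · rintro ⟨z1, z2⟩ _ hz
      rw [if_neg]
      rintro ⟨rfl, rfl⟩; exact hz rfl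
    · simp

lemma Zmat_add_matE_mem {n : ℕ} (v : V) (i j : Fin n) :
    ∃ t : ℝ, 0 < t ∧ Zmat n v i j + (t : ℂ) • P.matE n ∈ P.Dmax n := by
  by_cases hij : i = j
  · subst hij
    obtain ⟨t, ht, hm⟩ := P.e_orderUnit (-(v + star v))
      (by rw [star_neg, star_add, star_star, add_comm])
    refine ⟨t, ht, ?_⟩
    have hx : (v + star v) + (t : ℂ) • P.e ∈ P.pos := by
      have h1 : (t : ℂ) • P.e - -(v + star v) = (v + star v) + (t : ℂ) • P.e := by module
      rwa [h1] at hm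
    have hD := P.Dmax_add (P.eng_mem_Dmax (n := n) (fun p => if p = i then 1 else 0) hx)
      (P.diag_mem_Dmax (fun p => if p = i then 0 else t)
        (fun p => by by_cases hp : p = i <;> simp [hp, ht.le]))
    convert hD using 1
    ext p q
    by_cases hpi : p = i <;> by_cases hqi : q = i
    · simp [Zmat, eng, matE, Matrix.diagonal_apply, hpi, hqi]
    · have h2 : ¬ p = q := fun hh => hqi (hh.symm.trans hpi)
      have h3 : ¬ i = q := fun hh => hqi hh.symm
      simp [Zmat, eng, matE, Matrix.diagonal_apply, hpi, hqi, h2, h3]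
    · have h2 : ¬ p = q := fun hh => hpi (hh.trans hqi)
      simp [Zmat, eng, matE, Matrix.diagonal_apply, hpi, hqi, h2]
    · by_cases hpq : p = q <;>
        simp [Zmat, eng, matE, Matrix.diagonal_apply, hpi, hqi, hpq]
  · have hji : ¬ j = i := fun hh => hij hh.symm
    obtain ⟨h, hh⟩ : ∃ x : V, x = (1/2 : ℂ) • v + (1/2 : ℂ) • star v := ⟨_, rfl⟩
    obtain ⟨k, hk⟩ : ∃ x : V, x = (Complex.I/2) • star v - (Complex.I/2) • v := ⟨_, rfl⟩
    have hsh : star h = h := by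
      rw [hh, star_add, star_smul, star_smul, star_star,
        show star ((1:ℂ)/2) = (1:ℂ)/2 from by simp, add_comm]
    have hsk : star k = k := by
      rw [hk, star_sub, star_smul, star_smul, star_star,
        show star (Complex.I/2) = -(Complex.I/2) from by
          simp [Complex.star_def, map_div₀, Complex.conj_I, neg_div]]
      module
    have hv : v = h + Complex.I • k := by
      rw [hh, hk]
      match_scalars <;> simp [Complex.ext_iff] <;> norm_num
    have hsv : star v = h - Complex.I • k := by
      rw [hh, hk]
      match_scalars <;> simp [Complex.ext_iff] <;> norm_num
    clear hh hk
    obtain ⟨t1, ht1, hm1⟩ := P.e_orderUnit (-h) (by rw [star_neg, hsh])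
    obtain ⟨t2, ht2, hm2⟩ := P.e_orderUnit h hsh
    obtain ⟨t3, ht3, hm3⟩ := P.e_orderUnit (-k) (by rw [star_neg, hsk])
    obtain ⟨t4, ht4, hm4⟩ := P.e_orderUnit k hsk
    obtain ⟨r, hr⟩ : ∃ r : ℝ, r = t1 + t2 + t3 + t4 := ⟨_, rfl⟩
    have hx1 : (r : ℂ) • P.e + h ∈ P.pos := by
      have h0 := P.pos_add_mem _ hm1 _ (P.smul_e_mem (t2 + t3 + t4) (by positivity))
      have heq : ((t1:ℂ) • P.e - -h) + ((t2 + t3 + t4 : ℝ) : ℂ) • P.e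
          = (r:ℂ) • P.e + h := by rw [hr]; push_cast; module
      rwa [heq] at h0
    have hx2 : (r : ℂ) • P.e - h ∈ P.pos := by
      have h0 := P.pos_add_mem _ hm2 _ (P.smul_e_mem (t1 + t3 + t4) (by positivity))
      have heq : ((t2:ℂ) • P.e - h) + ((t1 + t3 + t4 : ℝ) : ℂ) • P.e
          = (r:ℂ) • P.e - h := by rw [hr]; push_cast; module
      rwa [heq] at h0
    have hx3 : (r : ℂ) • P.e + k ∈ P.pos := by
      have h0 := P.pos_add_mem _ hm3 _ (P.smul_e_mem (t1 + t2 + t4) (by positivity))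
      have heq : ((t3:ℂ) • P.e - -k) + ((t1 + t2 + t4 : ℝ) : ℂ) • P.e
          = (r:ℂ) • P.e + k := by rw [hr]; push_cast; module
      rwa [heq] at h0
    have hx4 : (r : ℂ) • P.e - k ∈ P.pos := by
      have h0 := P.pos_add_mem _ hm4 _ (P.smul_e_mem (t1 + t2 + t3) (by positivity))
      have heq : ((t4:ℂ) • P.e - k) + ((t1 + t2 + t3 : ℝ) : ℂ) • P.e
          = (r:ℂ) • P.e - k := by rw [hr]; push_cast; module
      rwa [heq] at h0
    have hrpos : 0 < r := by rw [hr]; positivity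
    obtain ⟨c1, hc1⟩ : ∃ c : Fin n → ℂ,
      c = fun p => (if p = i then 1 else 0) + (if p = j then 1 else 0) := ⟨_, rfl⟩
    obtain ⟨c2, hc2⟩ : ∃ c : Fin n → ℂ,
      c = fun p => (if p = i then 1 else 0) - (if p = j then 1 else 0) := ⟨_, rfl⟩
    obtain ⟨c3, hc3⟩ : ∃ c : Fin n → ℂ,
      c = fun p => (if p = i then 1 else 0) + Complex.I * (if p = j then 1 else 0) := ⟨_, rfl⟩
    obtain ⟨c4, hc4⟩ : ∃ c : Fin n → ℂ,
      c = fun p => (if p = i then 1 else 0) - Complex.I * (if p = j then 1 else 0) := ⟨_, rfl⟩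
    refine ⟨2 * r, by positivity, ?_⟩
    have hD : ((1/2 : ℝ) : ℂ) • eng n c1 ((r:ℂ) • P.e + h)
        + ((1/2 : ℝ) : ℂ) • eng n c2 ((r:ℂ) • P.e - h)
        + ((1/2 : ℝ) : ℂ) • eng n c3 ((r:ℂ) • P.e + k)
        + ((1/2 : ℝ) : ℂ) • eng n c4 ((r:ℂ) • P.e - k)
        + Matrix.of (fun p q =>
            if p = q then (((if p = i ∨ p = j then 0 else 2*r : ℝ)):ℂ) • P.e else 0)
        ∈ P.Dmax n := by
      refine P.Dmax_add (P.Dmax_add (P.Dmax_add (P.Dmax_add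
        (P.Dmax_smul _ (by norm_num) (P.eng_mem_Dmax c1 hx1))
        (P.Dmax_smul _ (by norm_num) (P.eng_mem_Dmax c2 hx2)))
        (P.Dmax_smul _ (by norm_num) (P.eng_mem_Dmax c3 hx3)))
        (P.Dmax_smul _ (by norm_num) (P.eng_mem_Dmax c4 hx4)))
        (P.diag_mem_Dmax _ (fun p => by
          by_cases hp : p = i ∨ p = j <;> simp [hp] <;> positivity))
    clear hx1 hx2 hx3 hx4 hm1 hm2 hm3 hm4 ht1 ht2 ht3 ht4 hrpos hr
    convert hD using 1
    ext p q
    by_cases hpq : p = q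
    · subst hpq
      by_cases hpi : p = i <;> by_cases hpj : p = j
      · exact absurd (hpi.symm.trans hpj) hij
      · subst hpi
        simp only [*, Zmat, eng, matE, Matrix.diagonal_apply, Matrix.smul_apply,
          Matrix.add_apply, Matrix.of_apply, star_add, star_sub, star_smul, star_star,
          Complex.star_def, _root_.map_add, _root_.map_sub, _root_.map_mul, _root_.map_one,
          _root_.map_zero, Complex.conj_I, Complex.I_mul_I, eq_self_iff_true, ite_true,
          ite_false, and_true, true_and, and_false, false_and, and_self, or_true, true_or,
          or_false, false_or, or_self, not_false_iff, Complex.ofReal_zero, zero_smul,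
          smul_zero, add_zero, zero_add, mul_zero, zero_mul, mul_one, one_mul, sub_zero,
          zero_sub, neg_neg, neg_mul, mul_neg, if_true, if_false] <;> push_cast <;> module
      · subst hpj
        simp only [*, Zmat, eng, matE, Matrix.diagonal_apply, Matrix.smul_apply,
          Matrix.add_apply, Matrix.of_apply, star_add, star_sub, star_smul, star_star,
          Complex.star_def, _root_.map_add, _root_.map_sub, _root_.map_mul, _root_.map_one,
          _root_.map_zero, Complex.conj_I, Complex.I_mul_I, eq_self_iff_true, ite_true,
          ite_false, and_true, true_and, and_false, false_and, and_self, or_true, true_or,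
          or_false, false_or, or_self, not_false_iff, Complex.ofReal_zero, zero_smul,
          smul_zero, add_zero, zero_add, mul_zero, zero_mul, mul_one, one_mul, sub_zero,
          zero_sub, neg_neg, neg_mul, mul_neg, if_true, if_false] <;> push_cast <;> module
      · simp only [*, Zmat, eng, matE, Matrix.diagonal_apply, Matrix.smul_apply,
          Matrix.add_apply, Matrix.of_apply, star_add, star_sub, star_smul, star_star,
          Complex.star_def, _root_.map_add, _root_.map_sub, _root_.map_mul, _root_.map_one,
          _root_.map_zero, Complex.conj_I, Complex.I_mul_I, eq_self_iff_true, ite_true,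
          ite_false, and_true, true_and, and_false, false_and, and_self, or_true, true_or,
          or_false, false_or, or_self, not_false_iff, Complex.ofReal_zero, zero_smul,
          smul_zero, add_zero, zero_add, mul_zero, zero_mul, mul_one, one_mul, sub_zero,
          zero_sub, neg_neg, neg_mul, mul_neg, if_true, if_false] <;> push_cast <;> module
    · by_cases hpi : p = i <;> by_cases hpj : p = j <;>
        by_cases hqi : q = i <;> by_cases hqj : q = j <;>
        first
        | exact absurd (hpi.symm.trans hpj) hij
        | exact absurd (hqi.symm.trans hqj) hij
        | exact absurd (hpi.trans hqi.symm) hpq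
        | exact absurd (hpj.trans hqj.symm) hpq
        | ((try subst hpi) <;> (try subst hpj) <;> (try subst hqi) <;> (try subst hqj) <;>
           simp only [*, Zmat, eng, matE, Matrix.diagonal_apply, Matrix.smul_apply,
          Matrix.add_apply, Matrix.of_apply, star_add, star_sub, star_smul, star_star,
          Complex.star_def, _root_.map_add, _root_.map_sub, _root_.map_mul, _root_.map_one,
          _root_.map_zero, Complex.conj_I, Complex.I_mul_I, eq_self_iff_true, ite_true,
          ite_false, and_true, true_and, and_false, false_and, and_self, or_true, true_or,
          or_false, false_or, or_self, not_false_iff, Complex.ofReal_zero, zero_smul,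
          smul_zero, add_zero, zero_add, mul_zero, zero_mul, mul_one, one_mul, sub_zero,
          zero_sub, neg_neg, neg_mul, mul_neg, if_true, if_false] <;> push_cast <;> module)

lemma Dmax_orderUnit {n : ℕ} (X : Matrix (Fin n) (Fin n) V) (hX : Xᴴ = X) :
    ∃ t : ℝ, 0 < t ∧ (t : ℂ) • P.matE n - X ∈ P.Dmax n := by
  choose t ht hmem using fun z : Fin n × Fin n => P.Zmat_add_matE_mem ((-X) z.1 z.2) z.1 z.2
  have hsum : ∑ z : Fin n × Fin n, (Zmat n ((-X) z.1 z.2) z.1 z.2 + (t z : ℂ) • P.matE n)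
      ∈ P.Dmax n := P.Dmax_sum _ _ fun z _ => hmem z
  rw [Finset.sum_add_distrib, sum_Zmat, Matrix.conjTranspose_neg, hX] at hsum
  have hhalf := P.Dmax_smul (1/2) (by norm_num) hsum
  have hT0 : 0 ≤ ∑ z : Fin n × Fin n, t z := Finset.sum_nonneg fun z _ => (ht z).le
  refine ⟨(∑ z : Fin n × Fin n, t z)/2 + 1, by linarith, ?_⟩
  have heq : (((∑ z : Fin n × Fin n, t z)/2 + 1 : ℝ) : ℂ) • P.matE n - X
      = ((1/2 : ℝ) : ℂ) • (-X + -X + ∑ z : Fin n × Fin n, (t z : ℂ) • P.matE n)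
        + P.matE n := by
    rw [← Finset.sum_smul]
    push_cast
    match_scalars <;> ring
  rw [heq]
  exact P.Dmax_add hhalf (P.matE_mem_Dmax n)

end OrderUnit

end AOUPack
namespace AOUPack

section CmaxStruct

variable {A V : Type*} [Ring A] [StarRing A] [Algebra ℂ A] [StarModule ℂ A]
  [AddCommGroup V] [Module ℂ V] [StarAddMonoid V] [StarModule ℂ V]
  (P : AOUPack A V)

lemma Cmax_zero (n : ℕ) : (0 : Matrix (Fin n) (Fin n) V) ∈ P.Cmax n :=
  P.Dmax_subset_Cmax (P.Dmax_zero n)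

lemma Cmax_add {n : ℕ} {X Y : Matrix (Fin n) (Fin n) V} (hX : X ∈ P.Cmax n)
    (hY : Y ∈ P.Cmax n) : X + Y ∈ P.Cmax n := by
  intro t ht
  have h1 := P.Dmax_add (hX (t/2) (by linarith)) (hY (t/2) (by linarith))
  have heq : (X + ((t/2 : ℝ) : ℂ) • P.matE n) + (Y + ((t/2 : ℝ) : ℂ) • P.matE n)
      = X + Y + (t : ℂ) • P.matE n := by push_cast; module
  rwa [heq] at h1

lemma Cmax_smul {n : ℕ} (s : ℝ) (hs : 0 ≤ s) {X : Matrix (Fin n) (Fin n) V}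
    (hX : X ∈ P.Cmax n) : (s : ℂ) • X ∈ P.Cmax n := by
  rcases eq_or_lt_of_le hs with hs0 | hs0
  · rw [← hs0]
    simpa using P.Cmax_zero n
  · intro t ht
    have hsne : (s : ℂ) ≠ 0 := Complex.ofReal_ne_zero.mpr hs0.ne'
    have h1 := P.Dmax_smul s hs (hX (t/s) (div_pos ht hs0))
    have heq : (s : ℂ) • (X + ((t/s : ℝ) : ℂ) • P.matE n)
        = (s : ℂ) • X + (t : ℂ) • P.matE n := by
      push_cast
      match_scalars
      · ring
      · field_simp
    rwa [heq] at h1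

lemma Cmax_herm {n : ℕ} {X : Matrix (Fin n) (Fin n) V} (hX : X ∈ P.Cmax n) : Xᴴ = X := by
  have h1 := P.Dmax_herm (hX 1 one_pos)
  rw [Matrix.conjTranspose_add, Matrix.conjTranspose_smul, P.matE_herm] at h1
  have h2 : star ((1 : ℝ) : ℂ) = ((1 : ℝ) : ℂ) := by simp
  rw [h2] at h1
  exact add_right_cancel h1

lemma Cmax_arch {n : ℕ} (X : Matrix (Fin n) (Fin n) V)
    (hX : ∀ t : ℝ, 0 < t → X + (t : ℂ) • P.matE n ∈ P.Cmax n) : X ∈ P.Cmax n := by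
  intro t ht
  have h1 := hX (t/2) (by linarith) (t/2) (by linarith)
  have heq : X + ((t/2 : ℝ) : ℂ) • P.matE n + ((t/2 : ℝ) : ℂ) • P.matE n
      = X + (t : ℂ) • P.matE n := by push_cast; module
  rwa [heq] at h1

lemma Cmax_conj {m n : ℕ} (M : Matrix (Fin m) (Fin n) A) {X : Matrix (Fin m) (Fin m) V}
    (hX : X ∈ P.Cmax m) : P.conj M X ∈ P.Cmax n := by
  intro s hs
  obtain ⟨c, hc, hcm⟩ := P.Dmax_orderUnit (P.conj M (P.matE m))
    (by rw [P.conjTranspose_conj, P.matE_herm])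
  have ht : 0 < s / c := div_pos hs hc
  have h2 := P.Dmax_conj M (hX (s/c) ht)
  have h3 := P.Dmax_smul (s/c) ht.le hcm
  have hcne : (c : ℂ) ≠ 0 := Complex.ofReal_ne_zero.mpr hc.ne'
  have heq : P.conj M (X + ((s/c : ℝ) : ℂ) • P.matE m)
      + ((s/c : ℝ) : ℂ) • ((c : ℂ) • P.matE n - P.conj M (P.matE m))
      = P.conj M X + (s : ℂ) • P.matE n := by
    rw [P.conj_add, P.conj_smul]
    push_cast
    match_scalars
    · ring
    · ring
    · field_simp
  rw [← heq]
  exact P.Dmax_add h2 h3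

lemma zero_mem_Q {Q : ∀ n : ℕ, Set (Matrix (Fin n) (Fin n) V)}
    (hQ : P.IsOperatorSystemStructure Q) (n : ℕ) :
    (0 : Matrix (Fin n) (Fin n) V) ∈ Q n := by
  obtain ⟨X, hX⟩ := hQ.nonempty n
  have h := hQ.smul_mem n 0 le_rfl X hX
  simpa using h

lemma Dmax_subset_Q {Q : ∀ n : ℕ, Set (Matrix (Fin n) (Fin n) V)}
    (hQ : P.IsOperatorSystemStructure Q) {n : ℕ}
    {X : Matrix (Fin n) (Fin n) V} (hX : X ∈ P.Dmax n) : X ∈ Q n := by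
  obtain ⟨kk, x, a, hx, rfl⟩ := hX
  refine Finset.sum_induction _ _ (fun a b ha hb => hQ.add_mem n a ha b hb)
    (P.zero_mem_Q hQ n) (fun i _ => ?_)
  exact hQ.compat 1 n _ (a i) ((hQ.level_one _).mpr (hx i))

lemma Cmax_subset_Q {Q : ∀ n : ℕ, Set (Matrix (Fin n) (Fin n) V)}
    (hQ : P.IsOperatorSystemStructure Q) {n : ℕ}
    {X : Matrix (Fin n) (Fin n) V} (hX : X ∈ P.Cmax n) : X ∈ Q n :=
  hQ.arch n X fun t ht => P.Dmax_subset_Q hQ (hX t ht)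

lemma cmax_isOSS {Q : ∀ n : ℕ, Set (Matrix (Fin n) (Fin n) V)}
    (hQ : P.IsOperatorSystemStructure Q) :
    P.IsOperatorSystemStructure P.Cmax where
  herm n X hX := P.Cmax_herm hX
  add_mem n X hX Y hY := P.Cmax_add hX hY
  smul_mem n t ht X hX := P.Cmax_smul t ht hX
  nonempty n := ⟨0, P.Cmax_zero n⟩
  salient n X hX hX' := hQ.salient n X (P.Cmax_subset_Q hQ hX) (P.Cmax_subset_Q hQ hX')
  compat m n X M hX := P.Cmax_conj M hX
  level_one X := by
    constructor
    · intro hX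
      exact (hQ.level_one X).mp (P.Cmax_subset_Q hQ hX)
    · intro hX
      apply P.Dmax_subset_Cmax
      refine ⟨1, fun _ => X 0 0, fun _ => 1, fun _ => hX, ?_⟩
      rw [Fin.sum_univ_one]
      ext p q
      have hp : p = 0 := Subsingleton.elim _ _
      have hq : q = 0 := Subsingleton.elim _ _
      subst hp; subst hq
      simp only [conj, vmul, amul, Matrix.of_apply, Fin.sum_univ_one,
        Matrix.conjTranspose_apply, Matrix.one_apply_eq, star_one]
      rw [P.one_l, P.r_one]
  orderUnit n X hX := by
    obtain ⟨t, ht, hm⟩ := P.Dmax_orderUnit X hX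
    exact ⟨t, ht, P.Dmax_subset_Cmax hm⟩
  arch n X hX := P.Cmax_arch X hX

end CmaxStruct

end AOUPack
universe u

/-- Theorem 3.9 (ii): if every positive `𝒜`-bimodule map from `(V, (Q_n), e)` into any
operator `𝒜`-system is completely positive, then `(Q_n)` is the maximal operator
`𝒜`-system structure (the identity is a unital `𝒜`-bimodule complete order
isomorphism onto `omax_𝒜(V)`). -/
theorem eq_cmax_of_univ_property
    {A : Type*} [CStarAlgebra A]
    {V : Type u} [AddCommGroup V] [Module ℂ V] [StarAddMonoid V] [StarModule ℂ V]
    (P : AOUPack A V) (Q : ∀ n : ℕ, Set (Matrix (Fin n) (Fin n) V))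
    (hQ : P.IsOperatorSystemStructure Q)
    (huniv : ∀ (S : Type u) [AddCommGroup S] [Module ℂ S] [StarAddMonoid S]
      [StarModule ℂ S] (PS : AOUPack A S)
      (QS : ∀ n : ℕ, Set (Matrix (Fin n) (Fin n) S)),
      PS.IsOperatorSystemStructure QS →
      ∀ φ : V →ₗ[ℂ] S,
        (∀ (a : A) (x : V), φ (P.l a x) = PS.l a (φ x)) →
        (∀ (x : V) (a : A), φ (P.r x a) = PS.r (φ x) a) →
        (∀ x ∈ P.pos, φ x ∈ PS.pos) →
        ∀ n : ℕ, ∀ X ∈ Q n, X.map φ ∈ QS n) :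
    ∀ n : ℕ, Q n = P.Cmax n := by
  intro n
  apply Set.Subset.antisymm
  · intro X hX
    have h := huniv V P P.Cmax (P.cmax_isOSS hQ) LinearMap.id (fun a x => rfl)
      (fun x a => rfl) (fun x hx => hx) n X hX
    have hmap : X.map (⇑(LinearMap.id : V →ₗ[ℂ] V)) = X := by
      ext i j; simp [Matrix.map_apply]
    rwa [hmap] at h
  · intro X hX
    exact P.Cmax_subset_Q hQ hX
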